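/- Let T > 0, n ∈ ℕ, σ ∈ ℕ, U ⊆ {0,1}ⁿ, and p ∈ [1,∞). Define D_max^Σ(U) as the set of all u ∈ L^p((0,T);ℝⁿ) that have a representative v : (0,T) → ℝⁿ with v(t) ∈ U for all t ∈ (0,T) and Σ_{j=1}^n Var(v_j;(0,T)) ≤ σ, where Var denotes the pointwise total variation. Then D_max^Σ(U) is closed in L^p((0,T);ℝⁿ). -/

import Mathlib

open MeasureTheory Set Filter
open scoped ENNReal Topology

/-- Extension lemma: if every point of `A` has, below any threshold `b < t`, a point
of `S` at which `f` takes the same value, then variation on `A` is bounded by that on `S`. -/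
lemma varA {f : ℝ → ℝ} {S A : Set ℝ}
    (h : ∀ t ∈ A, ∀ b : ℝ, b < t → ∃ s, s ∈ S ∧ b < s ∧ s ≤ t ∧ f s = f t) :
    eVariationOn f A ≤ eVariationOn f S := by
  rw [eVariationOn]
  refine iSup_le ?_
  rintro ⟨m, u, hu, us⟩
  have h' : ∀ t b : ℝ, ∃ s : ℝ, t ∈ A → b < t → s ∈ S ∧ b < s ∧ s ≤ t ∧ f s = f t := by
    intro t b
    by_cases ht : t ∈ A
    · by_cases hb : b < t
      · obtain ⟨s, hs⟩ := h t ht b hb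
        exact ⟨s, fun _ _ => hs⟩
      · exact ⟨0, fun _ hb' => absurd hb' hb⟩
    · exact ⟨0, fun ht' => absurd ht' ht⟩
  choose g hg using h'
  let w : ℕ → ℝ := fun k => Nat.rec (g (u 0) (u 0 - 1))
    (fun k wk => if u (k + 1) = u k then wk else g (u (k + 1)) (u k)) k
  have hw0 : w 0 = g (u 0) (u 0 - 1) := rfl
  have hws : ∀ k, w (k + 1) = if u (k + 1) = u k then w k else g (u (k + 1)) (u k) :=
    fun _ => rfl
  have key : ∀ k, w k ∈ S ∧ w k ≤ u k ∧ f (w k) = f (u k) := by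
    intro k
    induction k with
    | zero =>
      obtain ⟨h1, _, h3, h4⟩ := hg (u 0) (u 0 - 1) (us 0) (by linarith)
      exact ⟨h1, h3, h4⟩
    | succ k ih =>
      by_cases hc : u (k + 1) = u k
      · rw [hws, if_pos hc, hc]
        exact ih
      · have hlt : u k < u (k + 1) := lt_of_le_of_ne (hu (Nat.le_succ k)) (Ne.symm hc)
        obtain ⟨h1, _, h3, h4⟩ := hg (u (k + 1)) (u k) (us (k + 1)) hlt
        rw [hws, if_neg hc]
        exact ⟨h1, h3, h4⟩
  have wmono : Monotone w := by
    apply monotone_nat_of_le_succ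
    intro k
    by_cases hc : u (k + 1) = u k
    · rw [hws, if_pos hc]
    · have hlt : u k < u (k + 1) := lt_of_le_of_ne (hu (Nat.le_succ k)) (Ne.symm hc)
      obtain ⟨_, h2, _, _⟩ := hg (u (k + 1)) (u k) (us (k + 1)) hlt
      rw [hws, if_neg hc]
      exact le_of_lt (lt_of_le_of_lt (key k).2.1 h2)
  calc ∑ i ∈ Finset.range m, edist (f (u (i + 1))) (f (u i))
      = ∑ i ∈ Finset.range m, edist (f (w (i + 1))) (f (w i)) := by
        refine Finset.sum_congr rfl fun i _ => ?_
        rw [(key (i + 1)).2.2, (key i).2.2]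
    _ ≤ eVariationOn f S := eVariationOn.sum_le (f := f) (n := m) wmono fun i => (key i).1

/-- Chain lower bound on the total variation of a `{0,1}ⁿ`-valued function. -/
lemma chainB {n : ℕ} (v : ℝ → Fin n → ℝ) (S : Set ℝ)
    (hval : ∀ s ∈ S, ∀ j, v s j = 0 ∨ v s j = 1)
    (u : ℕ → ℝ) (hu : Monotone u) (us : ∀ i, u i ∈ S)
    (m : ℕ) (hne : ∀ i < m, v (u (2 * i)) ≠ v (u (2 * i + 1))) :
    (m : ℝ≥0∞) ≤ ∑ j : Fin n, eVariationOn (fun s => v s j) S := by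
  calc (m : ℝ≥0∞) = ∑ _i ∈ Finset.range m, 1 := by simp
    _ ≤ ∑ i ∈ Finset.range m, ∑ j : Fin n, edist (v (u (2 * i + 1)) j) (v (u (2 * i)) j) := by
        refine Finset.sum_le_sum fun i hi => ?_
        obtain ⟨j, hj⟩ := Function.ne_iff.mp (hne i (Finset.mem_range.mp hi))
        have h1 := hval _ (us (2 * i)) j
        have h2 := hval _ (us (2 * i + 1)) j
        have hd : edist (v (u (2 * i + 1)) j) (v (u (2 * i)) j) = 1 := by
          rw [edist_dist, Real.dist_eq]
          rcases h1 with h1 | h1 <;> rcases h2 with h2 | h2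
          · exact absurd (h1.trans h2.symm) hj
          · rw [h1, h2]; norm_num
          · rw [h1, h2]; norm_num
          · exact absurd (h1.trans h2.symm) hj
        rw [← hd]
        exact Finset.single_le_sum
          (f := fun j => edist (v (u (2 * i + 1)) j) (v (u (2 * i)) j))
          (fun j _ => zero_le) (Finset.mem_univ j)
    _ = ∑ j : Fin n, ∑ i ∈ Finset.range m, edist (v (u (2 * i + 1)) j) (v (u (2 * i)) j) :=
        Finset.sum_comm
    _ ≤ ∑ j : Fin n, ∑ i ∈ Finset.range (2 * m), edist (v (u (i + 1)) j) (v (u i) j) := by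
        refine Finset.sum_le_sum fun j _ => ?_
        have : ∑ i ∈ Finset.range m, edist (v (u (2 * i + 1)) j) (v (u (2 * i)) j)
            = ∑ i ∈ (Finset.range m).image (fun i => 2 * i),
                edist (v (u (i + 1)) j) (v (u i) j) := by
          rw [Finset.sum_image (by intro a _ b _ hab; simp only at hab; omega)]
        rw [this]
        refine Finset.sum_le_sum_of_subset ?_
        intro x hx
        simp only [Finset.mem_image, Finset.mem_range] at hx ⊢
        omega
    _ ≤ ∑ j : Fin n, eVariationOn (fun s => v s j) S :=
        Finset.sum_le_sum fun j _ => eVariationOn.sum_le hu us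

/-- Eventual constancy to the left of any point, for `{0,1}ⁿ`-valued functions of
bounded total variation. -/
lemma constC {n : ℕ} (v : ℝ → Fin n → ℝ) (S : Set ℝ) (σ : ℕ)
    (hval : ∀ s ∈ S, ∀ j, v s j = 0 ∨ v s j = 1)
    (hvar : ∑ j : Fin n, eVariationOn (fun s => v s j) S ≤ (σ : ℝ≥0∞))
    (t : ℝ) :
    ∃ b, b < t ∧ ∀ s1 ∈ S ∩ Ioo b t, ∀ s2 ∈ S ∩ Ioo b t, v s1 = v s2 := by
  by_contra hcon
  push_neg at hcon
  have hpair : ∀ b : ℝ, ∃ q : ℝ × ℝ,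
      b < t → q.1 ∈ S ∧ q.2 ∈ S ∧ b < q.1 ∧ q.1 < q.2 ∧ q.2 < t ∧ v q.1 ≠ v q.2 := by
    intro b
    by_cases hb : b < t
    · obtain ⟨s1, hs1, s2, hs2, hne⟩ := hcon b hb
      rcases lt_trichotomy s1 s2 with h | h | h
      · exact ⟨(s1, s2), fun _ => ⟨hs1.1, hs2.1, hs1.2.1, h, hs2.2.2, hne⟩⟩
      · exact absurd (by rw [h]) hne
      · exact ⟨(s2, s1), fun _ => ⟨hs2.1, hs1.1, hs2.2.1, h, hs1.2.2, Ne.symm hne⟩⟩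
    · exact ⟨(0, 0), fun h => absurd h hb⟩
  choose g hg using hpair
  let P : ℕ → ℝ × ℝ := fun k => Nat.rec (g (t - 1)) (fun _ pk => g pk.2) k
  have hP0 : P 0 = g (t - 1) := rfl
  have hPs : ∀ k, P (k + 1) = g (P k).2 := fun _ => rfl
  have key : ∀ k, (P k).1 ∈ S ∧ (P k).2 ∈ S ∧ (P k).1 < (P k).2 ∧ (P k).2 < t ∧
      v (P k).1 ≠ v (P k).2 := by
    intro k
    induction k with
    | zero =>
      obtain ⟨h1, h2, _, h4, h5, h6⟩ := hg (t - 1) (by linarith)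
      rw [hP0]
      exact ⟨h1, h2, h4, h5, h6⟩
    | succ k ih =>
      obtain ⟨h1, h2, _, h4, h5, h6⟩ := hg (P k).2 ih.2.2.2.1
      rw [hPs]
      exact ⟨h1, h2, h4, h5, h6⟩
  have hlink : ∀ k, (P k).2 < (P (k + 1)).1 := by
    intro k
    obtain ⟨_, _, h3, _, _, _⟩ := hg (P k).2 (key k).2.2.2.1
    rw [hPs]
    exact h3
  let u : ℕ → ℝ := fun i => if i % 2 = 0 then (P (i / 2)).1 else (P (i / 2)).2
  have hu1 : ∀ k, u (2 * k) = (P k).1 := by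
    intro k
    have e1 : (2 * k) % 2 = 0 := by omega
    have e2 : (2 * k) / 2 = k := by omega
    simp only [u, e1, e2, if_pos]
  have hu2 : ∀ k, u (2 * k + 1) = (P k).2 := by
    intro k
    have e1 : (2 * k + 1) % 2 = 1 := by omega
    have e2 : (2 * k + 1) / 2 = k := by omega
    simp only [u, e1, e2]
    norm_num
  have humono : Monotone u := by
    apply monotone_nat_of_le_succ
    intro i
    rcases Nat.even_or_odd i with ⟨k, hk⟩ | ⟨k, hk⟩
    · have hik : i = 2 * k := by omega
      have hik1 : i + 1 = 2 * k + 1 := by omega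
      rw [hik1, hik, hu1, hu2]
      exact (key k).2.2.1.le
    · have hik : i = 2 * k + 1 := by omega
      have hik1 : i + 1 = 2 * (k + 1) := by omega
      rw [hik1, hik, hu2, hu1]
      exact (hlink k).le
  have humem : ∀ i, u i ∈ S := by
    intro i
    rcases Nat.even_or_odd i with ⟨k, hk⟩ | ⟨k, hk⟩
    · have hik : i = 2 * k := by omega
      rw [hik, hu1]; exact (key k).1
    · have hik : i = 2 * k + 1 := by omega
      rw [hik, hu2]; exact (key k).2.1
  have hbig := chainB v S hval u humono humem (σ + 1) (by
    intro i _
    rw [hu1, hu2]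
    exact (key i).2.2.2.2)
  have : ((σ : ℝ≥0∞) + 1) ≤ (σ : ℝ≥0∞) := by
    calc ((σ : ℝ≥0∞) + 1) = ((σ + 1 : ℕ) : ℝ≥0∞) := by push_cast; ring
      _ ≤ _ := hbig.trans hvar
  exact absurd this (not_le.mpr (ENNReal.lt_add_right (ENNReal.natCast_ne_top σ) one_ne_zero))

/-- Superadditivity of `liminf` for finite sums in `ℝ≥0∞`. -/
lemma sumliminfD {n : ℕ} (g : Fin n → ℕ → ℝ≥0∞) :
    ∑ j : Fin n, Filter.atTop.liminf (g j) ≤ Filter.atTop.liminf (fun i => ∑ j : Fin n, g j i) := by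
  have h1 : ∀ j : Fin n, Filter.atTop.liminf (g j) = ⨆ N : ℕ, ⨅ i ≥ N, g j i :=
    fun j => liminf_eq_iSup_iInf_of_nat
  simp only [h1, liminf_eq_iSup_iInf_of_nat]
  rw [ENNReal.finsetSum_iSup_of_monotone]
  · refine iSup_mono fun N => ?_
    refine le_iInf₂ fun i hi => ?_
    exact Finset.sum_le_sum fun j _ => iInf₂_le i hi
  · intro j N M hNM
    exact le_iInf₂ fun i hi => iInf₂_le i (hNM.trans hi)

set_option synthInstance.maxHeartbeats 1000000 in
/-- Lemma of Section 3.1, closedness: the set `D_max^Σ(U)` of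
controls with a representative taking values in `U ⊆ {0,1}ⁿ` at every time and
with total pointwise variation of all components bounded by `σ` is closed in
`L^p((0,T);ℝⁿ)`. -/
theorem stmt_11
    (T : ℝ) (hT : 0 < T) (n : ℕ) (σ : ℕ)
    (U : Set (Fin n → ℝ)) (hU : ∀ w ∈ U, ∀ j, w j = 0 ∨ w j = 1)
    (p : ℝ≥0∞) [Fact (1 ≤ p)] (hp : p ≠ ⊤) :
    IsClosed {u : Lp (Fin n → ℝ) p (volume.restrict (Ioo (0:ℝ) T)) |
      ∃ v : ℝ → Fin n → ℝ,
        ((u : ℝ → Fin n → ℝ) =ᵐ[volume.restrict (Ioo (0:ℝ) T)] v) ∧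
        (∀ t ∈ Ioo (0:ℝ) T, v t ∈ U) ∧
        (∑ j : Fin n, eVariationOn (fun s => v s j) (Ioo (0:ℝ) T)) ≤ (σ : ℝ≥0∞)} := by
  classical
  set I : Set ℝ := Ioo (0:ℝ) T with hI
  set μ : Measure ℝ := volume.restrict I with hμ
  -- U is finite, hence closed
  have hUfin : U.Finite := by
    refine Set.Finite.subset (Set.Finite.pi (fun _ : Fin n => (Set.finite_singleton (1:ℝ)).insert 0)) ?_
    intro w hw
    simp only [Set.mem_pi, Set.mem_univ, forall_true_left, Set.mem_insert_iff,
      Set.mem_singleton_iff]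
    intro j
    exact hU w hw j
  have hUclosed : IsClosed U := hUfin.isClosed
  refine IsSeqClosed.isClosed ?_
  intro u f hu hten
  -- convergence in measure, then a.e. convergence along a subsequence
  have htim : TendstoInMeasure μ (fun k => (u k : ℝ → Fin n → ℝ)) atTop (f : ℝ → Fin n → ℝ) :=
    tendstoInMeasure_of_tendsto_Lp hten
  obtain ⟨ns, -, hae⟩ := htim.exists_seq_tendsto_ae
  -- representatives
  have hrep : ∀ i : ℕ, ∃ v : ℝ → Fin n → ℝ,
      ((u (ns i) : ℝ → Fin n → ℝ) =ᵐ[μ] v) ∧ (∀ t ∈ I, v t ∈ U) ∧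
      (∑ j : Fin n, eVariationOn (fun s => v s j) I) ≤ (σ : ℝ≥0∞) := fun i => hu (ns i)
  choose v hv1 hv2 hv3 using hrep
  set f' : ℝ → Fin n → ℝ := (f : ℝ → Fin n → ℝ) with hf'
  -- a.e. convergence of the representatives
  have haev : ∀ᵐ t ∂μ, Tendsto (fun i => v i t) atTop (𝓝 (f' t)) := by
    have hall : ∀ᵐ t ∂μ, ∀ i, (u (ns i) : ℝ → Fin n → ℝ) t = v i t :=
      (ae_all_iff).mpr fun i => hv1 i
    filter_upwards [hae, hall] with t h1 h2
    exact h1.congr fun i => h2 i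
  set S : Set ℝ := I ∩ {t | Tendsto (fun i => v i t) atTop (𝓝 (f' t))} with hS
  have hSI : S ⊆ I := inter_subset_left
  have hnull : volume (I \ S) = 0 := by
    have h0 : μ {t | ¬ Tendsto (fun i => v i t) atTop (𝓝 (f' t))} = 0 := by
      rw [← ae_iff] ; exact haev
    rw [hμ, Measure.restrict_apply' measurableSet_Ioo] at h0
    refine measure_mono_null ?_ h0
    intro x hx
    exact ⟨fun hx2 => hx.2 ⟨hx.1, hx2⟩, hx.1⟩
  have hdense : ∀ a b : ℝ, 0 ≤ a → a < b → b ≤ T → (S ∩ Ioo a b).Nonempty := by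
    intro a b ha hab hbT
    by_contra hempty
    rw [Set.not_nonempty_iff_eq_empty] at hempty
    have hsub : Ioo a b ⊆ I \ S := by
      intro x hx
      have hxI : x ∈ I := ⟨lt_of_le_of_lt ha hx.1, lt_of_lt_of_le hx.2 hbT⟩
      refine ⟨hxI, fun hxS => ?_⟩
      have : x ∈ S ∩ Ioo a b := ⟨hxS, hx⟩
      rw [hempty] at this
      exact this
    have := measure_mono_null hsub hnull
    rw [Real.volume_Ioo] at this
    exact absurd this (by simp [ENNReal.ofReal_eq_zero]; linarith)
  have hvalS : ∀ s ∈ S, f' s ∈ U := by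
    intro s hs
    exact hUclosed.mem_of_tendsto hs.2 (Eventually.of_forall fun i => hv2 i s (hSI hs))
  have hvalSbits : ∀ s ∈ S, ∀ j, f' s j = 0 ∨ f' s j = 1 :=
    fun s hs j => hU _ (hvalS s hs) j
  -- variation bound on S for the limit, via lower semicontinuity
  have hvarS : ∑ j : Fin n, eVariationOn (fun s => f' s j) S ≤ (σ : ℝ≥0∞) := by
    have hliminf : ∀ j : Fin n, eVariationOn (fun s => f' s j) S ≤
        Filter.atTop.liminf (fun i => eVariationOn (fun s => v i s j) S) := by
      intro j
      by_contra hlt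
      push_neg at hlt
      obtain ⟨c, hc1, hc2⟩ := exists_between hlt
      have hev : ∀ᶠ i in atTop, c < eVariationOn (fun s => v i s j) S := by
        refine eVariationOn.lowerSemicontinuous_aux (F := fun i s => v i s j)
          (f := fun s => f' s j) (p := atTop) ?_ hc2
        intro x hx
        have := hx.2
        exact (tendsto_pi_nhds.mp this) j
      have := le_liminf_of_le (by isBoundedDefault) (hev.mono fun i h => h.le)
      exact absurd (this.trans_lt hc1) (lt_irrefl c)
    calc ∑ j : Fin n, eVariationOn (fun s => f' s j) S
        ≤ ∑ j : Fin n, Filter.atTop.liminf (fun i => eVariationOn (fun s => v i s j) S) :=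
          Finset.sum_le_sum fun j _ => hliminf j
      _ ≤ Filter.atTop.liminf (fun i => ∑ j : Fin n, eVariationOn (fun s => v i s j) S) :=
          sumliminfD _
      _ ≤ Filter.atTop.liminf (fun _ : ℕ => (σ : ℝ≥0∞)) := by
          refine liminf_le_liminf (Eventually.of_forall fun i => ?_)
          calc ∑ j : Fin n, eVariationOn (fun s => v i s j) S
              ≤ ∑ j : Fin n, eVariationOn (fun s => v i s j) I :=
                Finset.sum_le_sum fun j _ => eVariationOn.mono _ hSI
            _ ≤ (σ : ℝ≥0∞) := hv3 i
      _ = (σ : ℝ≥0∞) := liminf_const _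
  -- eventual constancy to the left, and extension
  have hconst : ∀ t : ℝ, ∃ c : Fin n → ℝ, t ∈ I \ S →
      c ∈ U ∧ ∃ b, b < t ∧ ∀ s ∈ S ∩ Ioo b t, f' s = c := by
    intro t
    by_cases ht : t ∈ I \ S
    · obtain ⟨b, hbt, hcst⟩ := constC f' S σ hvalSbits hvarS t
      have hmaxlt : max b 0 < t := max_lt hbt ht.1.1
      obtain ⟨s0, hs0⟩ := hdense (max b 0) t (le_max_right _ _) hmaxlt ht.1.2.le
      refine ⟨f' s0, fun _ => ⟨hvalS s0 hs0.1, max b 0, hmaxlt, ?_⟩⟩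
      intro s hs
      exact hcst s ⟨hs.1, lt_of_le_of_lt (le_max_left b 0) hs.2.1, hs.2.2⟩
        s0 ⟨hs0.1, lt_of_le_of_lt (le_max_left b 0) hs0.2.1, hs0.2.2⟩
    · exact ⟨0, fun h => absurd h ht⟩
  choose c hc using hconst
  set vb : ℝ → Fin n → ℝ := fun t => if t ∈ S then f' t else c t with hvb
  refine ⟨vb, ?_, ?_, ?_⟩
  · -- a.e. equality
    rw [Filter.EventuallyEq, ae_iff]
    refine measure_mono_null (fun x hx => ?_) (by
      rw [hμ, Measure.restrict_apply' measurableSet_Ioo]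
      refine measure_mono_null (fun x hx => ?_) hnull
      exact ⟨hx.2, hx.1⟩)
    simp only [Set.mem_setOf_eq] at hx ⊢
    intro hxS
    exact hx (by simp [hvb, if_pos hxS]; rfl)
  · -- values in U
    intro t ht
    by_cases htS : t ∈ S
    · simpa [hvb, if_pos htS] using hvalS t htS
    · have := (hc t ⟨ht, htS⟩).1
      simpa [hvb, if_neg htS] using this
  · -- variation bound
    have happrox : ∀ t ∈ I, ∀ b : ℝ, b < t → ∃ s, s ∈ S ∧ b < s ∧ s ≤ t ∧ vb s = vb t := by
      intro t ht b hb
      by_cases htS : t ∈ S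
      · exact ⟨t, htS, hb, le_refl t, rfl⟩
      · obtain ⟨hcU, b0, hb0t, hcst⟩ := hc t ⟨ht, htS⟩
        have hlt : max b (max b0 0) < t := max_lt hb (max_lt hb0t ht.1)
        obtain ⟨s, hs⟩ := hdense (max b (max b0 0)) t
          ((le_max_right b0 0).trans (le_max_right b _)) hlt ht.2.le
        refine ⟨s, hs.1, lt_of_le_of_lt (le_max_left b _) hs.2.1, hs.2.2.le, ?_⟩
        have h1 : vb s = f' s := by simp [hvb, if_pos hs.1]
        have h2 : vb t = c t := by simp [hvb, if_neg htS]
        rw [h1, h2]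
        exact hcst s ⟨hs.1,
          lt_of_le_of_lt ((le_max_left b0 0).trans (le_max_right b _)) hs.2.1, hs.2.2⟩
    calc ∑ j : Fin n, eVariationOn (fun s => vb s j) I
        ≤ ∑ j : Fin n, eVariationOn (fun s => vb s j) S := by
          refine Finset.sum_le_sum fun j _ => varA ?_
          intro t ht b hb
          obtain ⟨s, hsS, hbs, hst, hveq⟩ := happrox t ht b hb
          exact ⟨s, hsS, hbs, hst, by rw [hveq]⟩
      _ = ∑ j : Fin n, eVariationOn (fun s => f' s j) S := by
          refine Finset.sum_congr rfl fun j _ => eVariationOn.eq_of_eqOn fun s hs => ?_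
          simp [hvb, if_pos hs]
      _ ≤ (σ : ℝ≥0∞) := hvarS
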